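/- Let κ ∈ ℂ, δ > 0, C ≥ 0, and s ∈ ℝ with s > Re κ. Suppose γ : (0, δ] → ℂ is differentiable and the function g(X) := X γ′(X) − κ γ(X) satisfies |g(X)| ≤ C X^s for all X ∈ (0, δ]. Then there is a unique constant c ∈ ℂ such that for some C′ ≥ 0 one has |γ(X) − c X^κ| ≤ C′ X^s for all X ∈ (0, δ], where X^κ = exp(κ log X) denotes the complex power. -/

import Mathlib

open Complex MeasureTheory intervalIntegral Filter

private lemma stmt13_hasDeriv (κ : ℂ) (γ : ℝ → ℂ) {t : ℝ} (ht : 0 < t)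
    (hγ : DifferentiableAt ℝ γ t) :
    HasDerivAt (fun X => γ X * Complex.exp (-κ * Real.log X))
      (((t : ℂ) * deriv γ t - κ * γ t) * Complex.exp (-κ * Real.log t) / t) t := by
  have hlog : HasDerivAt (fun X : ℝ => ((Real.log X : ℝ) : ℂ)) ((t⁻¹ : ℝ) : ℂ) t :=
    (Real.hasDerivAt_log ht.ne').ofReal_comp
  have hE : HasDerivAt (fun X : ℝ => Complex.exp (-κ * Real.log X))
      (Complex.exp (-κ * Real.log t) * (-κ * ((t⁻¹ : ℝ) : ℂ))) t :=
    (hlog.const_mul (-κ)).cexp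
  have hmul := hγ.hasDerivAt.mul hE
  convert hmul using 1
  · rfl
  · rfl
  have ht' : (t : ℂ) ≠ 0 := by exact_mod_cast ht.ne'
  push_cast
  have e : deriv γ t * Complex.exp (-κ * Real.log t) * ((t : ℂ) * (t : ℂ)⁻¹) =
      deriv γ t * Complex.exp (-κ * Real.log t) := by rw [mul_inv_cancel₀ ht', mul_one]
  linear_combination e

/-- regular-singular ODE lemma: if `X γ′(X) − κ γ(X) = O(X^s)`
on `(0, δ]` with `s > Re κ`, then there is a unique constant `c` with
`γ(X) = c X^κ + O(X^s)`. -/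
theorem stmt_13 (κ : ℂ) (δ : ℝ) (hδ : 0 < δ) (C : ℝ) (hC : 0 ≤ C)
    (s : ℝ) (hs : κ.re < s) (γ : ℝ → ℂ)
    (hdiff : ∀ X ∈ Set.Ioc (0 : ℝ) δ, DifferentiableAt ℝ γ X)
    (hbound : ∀ X ∈ Set.Ioc (0 : ℝ) δ,
      ‖(X : ℂ) * deriv γ X - κ * γ X‖ ≤ C * X ^ s) :
    ∃! c : ℂ, ∃ C' : ℝ, 0 ≤ C' ∧
      ∀ X ∈ Set.Ioc (0 : ℝ) δ, ‖γ X - c * (X : ℂ) ^ κ‖ ≤ C' * X ^ s := by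
  set ε : ℝ := s - κ.re with hεdef
  have hε : 0 < ε := by simp [hεdef]; linarith
  set h : ℝ → ℂ := fun X => γ X * Complex.exp (-κ * Real.log X) with hh
  -- norm of the exponential factor
  have hEnorm : ∀ t : ℝ, 0 < t → ‖Complex.exp (-κ * Real.log t)‖ = t ^ (-κ.re) := by
    intro t ht
    rw [Complex.norm_exp, Real.rpow_def_of_pos ht]
    congr 1
    simp [Complex.mul_re]
    ring
  -- the complex power in terms of exp
  have hcpow : ∀ X : ℝ, 0 < X →
      ((X : ℂ) ^ κ) = Complex.exp ((Real.log X : ℂ) * κ) := by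
    intro X hX
    rw [Complex.cpow_def_of_ne_zero (by exact_mod_cast hX.ne'), Complex.ofReal_log hX.le]
  have hinv : ∀ X : ℝ, 0 < X →
      Complex.exp (-κ * Real.log X) * Complex.exp ((Real.log X : ℂ) * κ) = 1 := by
    intro X hX
    rw [← Complex.exp_add, show -κ * (Real.log X : ℂ) + (Real.log X : ℂ) * κ = 0 by ring,
      Complex.exp_zero]
  -- pointwise derivative bound
  have hderiv : ∀ t ∈ Set.Ioc (0 : ℝ) δ, HasDerivAt h (deriv h t) t := by
    intro t ht
    exact ((stmt13_hasDeriv κ γ ht.1 (hdiff t ht)).differentiableAt).hasDerivAt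
  have hderiv_bound : ∀ t ∈ Set.Ioc (0 : ℝ) δ, ‖deriv h t‖ ≤ C * t ^ (ε - 1) := by
    intro t ht
    rw [(stmt13_hasDeriv κ γ ht.1 (hdiff t ht)).deriv]
    have ht0 := ht.1
    rw [norm_div, norm_mul, hEnorm t ht0]
    have h1 : ‖((t : ℝ) : ℂ)‖ = t := by
      rw [Complex.norm_real, Real.norm_of_nonneg ht0.le]
    rw [h1]
    have h2 : ‖(t : ℂ) * deriv γ t - κ * γ t‖ ≤ C * t ^ s := hbound t ht
    have h3 : (0 : ℝ) < t ^ (-κ.re) := Real.rpow_pos_of_pos ht0 _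
    calc ‖(t : ℂ) * deriv γ t - κ * γ t‖ * t ^ (-κ.re) / t
        ≤ C * t ^ s * t ^ (-κ.re) / t :=
          div_le_div_of_nonneg_right (mul_le_mul_of_nonneg_right h2 h3.le) ht0.le
      _ = C * t ^ (ε - 1) := by
          rw [show ε - 1 = s + (-κ.re) + (-1) by ring, Real.rpow_add ht0, Real.rpow_add ht0,
            Real.rpow_neg_one]
          field_simp
  -- key FTC estimate
  have key : ∀ a b : ℝ, 0 < a → a ≤ b → b ≤ δ → ‖h b - h a‖ ≤ C / ε * b ^ ε := by
    intro a b ha hab hbδ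
    have hsub : Set.uIcc a b ⊆ Set.Ioc (0 : ℝ) δ := by
      rw [Set.uIcc_of_le hab]
      exact fun x hx => ⟨lt_of_lt_of_le ha hx.1, le_trans hx.2 hbδ⟩
    have hInt2 : IntervalIntegrable (fun t : ℝ => C * t ^ (ε - 1)) volume a b := by
      apply ContinuousOn.intervalIntegrable
      apply ContinuousOn.mul continuousOn_const
      intro x hx
      exact (Real.continuousAt_rpow_const x (ε - 1)
        (Or.inl (hsub hx).1.ne')).continuousWithinAt
    have hInt1 : IntervalIntegrable (deriv h) volume a b := by
      apply hInt2.mono_fun ((measurable_deriv h).aestronglyMeasurable.restrict)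
      rw [Set.uIoc_of_le hab]
      refine (ae_restrict_iff' measurableSet_Ioc).mpr (ae_of_all _ fun x hx => ?_)
      have hx' : x ∈ Set.Ioc (0 : ℝ) δ := ⟨lt_of_lt_of_le ha hx.1.le, le_trans hx.2 hbδ⟩
      have hthis := hderiv_bound x hx'
      have hge : (0 : ℝ) ≤ C * x ^ (ε - 1) :=
        mul_nonneg hC (Real.rpow_nonneg hx'.1.le _)
      simpa [Real.norm_of_nonneg hge] using hthis
    have hFTC : ∫ t in a..b, deriv h t = h b - h a :=
      intervalIntegral.integral_eq_sub_of_hasDerivAt (fun x hx => hderiv x (hsub hx)) hInt1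
    rw [← hFTC]
    calc ‖∫ t in a..b, deriv h t‖ ≤ ∫ t in a..b, ‖deriv h t‖ :=
          intervalIntegral.norm_integral_le_integral_norm hab
      _ ≤ ∫ t in a..b, C * t ^ (ε - 1) := by
          apply intervalIntegral.integral_mono_on hab hInt1.norm hInt2
          intro x hx
          exact hderiv_bound x ⟨lt_of_lt_of_le ha hx.1, le_trans hx.2 hbδ⟩
      _ = C * ((b ^ ε - a ^ ε) / ε) := by
          rw [intervalIntegral.integral_const_mul, integral_rpow (Or.inl (by linarith))]
          norm_num
      _ ≤ C / ε * b ^ ε := by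
          have ha' : (0 : ℝ) ≤ a ^ ε := Real.rpow_nonneg ha.le _
          rw [div_mul_eq_mul_div, mul_div_assoc]
          gcongr C * (?_ / ε)
          linarith
  -- the approximating sequence
  set a : ℕ → ℝ := fun n => δ / (n + 1) with ha_def
  have ha_pos : ∀ n, 0 < a n := fun n => div_pos hδ (by positivity)
  have ha_le : ∀ n, a n ≤ δ := by
    intro n
    rw [ha_def]
    rw [div_le_iff₀ (by positivity : (0:ℝ) < (n:ℝ) + 1)]
    nlinarith [hδ.le, (Nat.cast_nonneg n : (0:ℝ) ≤ n)]
  have ha_anti : ∀ {m n : ℕ}, m ≤ n → a n ≤ a m := by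
    intro m n hmn
    apply div_le_div_of_nonneg_left hδ.le (by positivity)
    exact_mod_cast by simpa using Nat.succ_le_succ hmn
  have ha_tendsto : Tendsto a atTop (nhds 0) := by
    have h1 : Tendsto (fun n : ℕ => ((n : ℝ) + 1)) atTop atTop :=
      tendsto_atTop_add_const_right _ 1 tendsto_natCast_atTop_atTop
    exact h1.const_div_atTop δ
  have haε_tendsto : Tendsto (fun n => C / ε * (a n) ^ ε) atTop (nhds 0) := by
    have h1 : Tendsto (fun n => (a n) ^ ε) atTop (nhds 0) := by
      have := (Real.continuousAt_rpow_const 0 ε (Or.inr hε.le)).tendsto.comp ha_tendsto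
      simpa [Real.zero_rpow hε.ne', Function.comp_def] using this
    simpa using h1.const_mul (C / ε)
  have hcauchy : CauchySeq (fun n => h (a n)) := by
    apply cauchySeq_of_le_tendsto_0 (fun N => C / ε * (a N) ^ ε) _ haε_tendsto
    intro n m N hn hm
    have hbd : ∀ p q : ℕ, N ≤ p → N ≤ q → a p ≤ a q →
        dist (h (a q)) (h (a p)) ≤ C / ε * (a N) ^ ε := by
      intro p q hp hq hpq
      rw [dist_eq_norm]
      calc ‖h (a q) - h (a p)‖ ≤ C / ε * (a q) ^ ε :=
            key (a p) (a q) (ha_pos p) hpq (ha_le q)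
        _ ≤ C / ε * (a N) ^ ε :=
            mul_le_mul_of_nonneg_left
              (Real.rpow_le_rpow (ha_pos q).le (ha_anti hq) hε.le)
              (div_nonneg hC hε.le)
    show dist (h (a n)) (h (a m)) ≤ C / ε * (a N) ^ ε
    rcases le_total (a n) (a m) with hle | hle
    · rw [dist_comm]; exact hbd n m hn hm hle
    · exact hbd m n hm hn hle
  obtain ⟨c, hc⟩ := cauchySeq_tendsto_of_complete hcauchy
  -- the main estimate for h
  have hmain : ∀ X ∈ Set.Ioc (0 : ℝ) δ, ‖h X - c‖ ≤ C / ε * X ^ ε := by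
    intro X hX
    have hlim : Tendsto (fun n => ‖h X - h (a n)‖) atTop (nhds ‖h X - c‖) :=
      ((tendsto_const_nhds.sub hc).norm)
    apply le_of_tendsto hlim
    have hev : ∀ᶠ n in atTop, a n ≤ X :=
      ha_tendsto.eventually_le_const hX.1
    exact hev.mono fun n hn => key (a n) X (ha_pos n) hn hX.2
  -- convert h estimate to γ estimate
  have hconv : ∀ (d : ℂ) (X : ℝ), X ∈ Set.Ioc (0 : ℝ) δ →
      γ X - d * (X : ℂ) ^ κ = (h X - d) * (X : ℂ) ^ κ := by
    intro d X hX
    rw [hcpow X hX.1, hh]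
    simp only [sub_mul]
    congr 1
    rw [mul_assoc, hinv X hX.1, mul_one]
  have hpow_norm : ∀ X : ℝ, 0 < X → ‖((X : ℂ)) ^ κ‖ = X ^ κ.re := by
    intro X hX
    exact Complex.norm_cpow_eq_rpow_re_of_pos hX κ
  refine ⟨c, ⟨C / ε, div_nonneg hC hε.le, ?_⟩, ?_⟩
  · intro X hX
    rw [hconv c X hX, norm_mul, hpow_norm X hX.1]
    calc ‖h X - c‖ * X ^ κ.re ≤ (C / ε * X ^ ε) * X ^ κ.re := by
          gcongr
          · exact Real.rpow_nonneg hX.1.le _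
          · exact hmain X hX
      _ = C / ε * X ^ s := by
          rw [mul_assoc, ← Real.rpow_add hX.1]
          congr 2
          simp [hεdef]
  · rintro c' ⟨C', hC', hbd'⟩
    have hbd : ∃ C₀ : ℝ, 0 ≤ C₀ ∧ ∀ X ∈ Set.Ioc (0 : ℝ) δ, ‖γ X - c * (X : ℂ) ^ κ‖ ≤ C₀ * X ^ s := by
      refine ⟨C / ε, div_nonneg hC hε.le, fun X hX => ?_⟩
      rw [hconv c X hX, norm_mul, hpow_norm X hX.1]
      calc ‖h X - c‖ * X ^ κ.re ≤ (C / ε * X ^ ε) * X ^ κ.re := by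
            gcongr
            · exact Real.rpow_nonneg hX.1.le _
            · exact hmain X hX
        _ = C / ε * X ^ s := by
            rw [mul_assoc, ← Real.rpow_add hX.1]
            congr 2
            simp [hεdef]
    obtain ⟨C₀, hC₀, hbd₀⟩ := hbd
    have hdiff_le : ∀ X ∈ Set.Ioc (0 : ℝ) δ, ‖c' - c‖ ≤ (C' + C₀) * X ^ ε := by
      intro X hX
      have h1 : ‖(c' - c) * (X : ℂ) ^ κ‖ ≤ (C' + C₀) * X ^ s := by
        have : (c' - c) * (X : ℂ) ^ κ =
            (γ X - c * (X : ℂ) ^ κ) - (γ X - c' * (X : ℂ) ^ κ) := by ring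
        rw [this]
        calc ‖(γ X - c * (X : ℂ) ^ κ) - (γ X - c' * (X : ℂ) ^ κ)‖
            ≤ ‖γ X - c * (X : ℂ) ^ κ‖ + ‖γ X - c' * (X : ℂ) ^ κ‖ := norm_sub_le _ _
          _ ≤ C₀ * X ^ s + C' * X ^ s := add_le_add (hbd₀ X hX) (hbd' X hX)
          _ = (C' + C₀) * X ^ s := by ring
      rw [norm_mul, hpow_norm X hX.1] at h1
      have hXκ : (0 : ℝ) < X ^ κ.re := Real.rpow_pos_of_pos hX.1 _
      have h2 : ‖c' - c‖ * X ^ κ.re ≤ ((C' + C₀) * X ^ ε) * X ^ κ.re := by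
        calc ‖c' - c‖ * X ^ κ.re ≤ (C' + C₀) * X ^ s := h1
          _ = ((C' + C₀) * X ^ ε) * X ^ κ.re := by
            rw [mul_assoc, ← Real.rpow_add hX.1]
            congr 2
            simp [hεdef]
      exact le_of_mul_le_mul_right h2 hXκ
    have hlim : Tendsto (fun n => (C' + C₀) * (a n) ^ ε) atTop (nhds 0) := by
      have h1 : Tendsto (fun n => (a n) ^ ε) atTop (nhds 0) := by
        have := (Real.continuousAt_rpow_const 0 ε (Or.inr hε.le)).tendsto.comp ha_tendsto
        simpa [Real.zero_rpow hε.ne', Function.comp_def] using this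
      simpa using h1.const_mul (C' + C₀)
    have hle0 : ‖c' - c‖ ≤ 0 :=
      ge_of_tendsto' hlim fun n => hdiff_le (a n) ⟨ha_pos n, ha_le n⟩
    have : c' - c = 0 := by
      rw [← norm_le_zero_iff]
      exact hle0
    exact sub_eq_zero.mp this
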